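/- Let n ≥ 1 and let S be a left-handed skew Boolean algebra freely generated by a set of n distinct elements. Then S is finite and its cardinality is |S| = ∏_{m=1}^{n} (m+1)^{C(n,m)}, where C(n,m) is the binomial coefficient. -/

import Mathlib

universe u

/-- A skew Boolean algebra. -/
class SBA (S : Type u) where
  wedge : S → S → S
  vee : S → S → S
  diff : S → S → S
  zero : S
  wedge_assoc : ∀ x y z : S, wedge (wedge x y) z = wedge x (wedge y z)
  vee_assoc : ∀ x y z : S, vee (vee x y) z = vee x (vee y z)
  absorb1 : ∀ x y : S, wedge x (vee x y) = x
  absorb2 : ∀ x y : S, wedge (vee y x) x = x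
  absorb3 : ∀ x y : S, vee x (wedge x y) = x
  absorb4 : ∀ x y : S, vee (wedge y x) x = x
  sdistrib1 : ∀ x y z : S, wedge x (vee y z) = vee (wedge x y) (wedge x z)
  sdistrib2 : ∀ x y z : S, wedge (vee x y) z = vee (wedge x z) (wedge y z)
  zero_wedge : ∀ x : S, wedge zero x = zero
  wedge_zero : ∀ x : S, wedge x zero = zero
  zero_vee : ∀ x : S, vee zero x = x
  vee_zero : ∀ x : S, vee x zero = x
  diff_ax1 : ∀ x y : S, vee (wedge (wedge x y) x) (diff x y) = x
  diff_ax2 : ∀ x y : S, wedge (wedge (wedge x y) x) (diff x y) = zero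
  diff_ax3 : ∀ x y : S, wedge (diff x y) (wedge (wedge x y) x) = zero

namespace SBA

scoped infixl:70 " ⋏ " => SBA.wedge
scoped infixl:65 " ⋎ " => SBA.vee
scoped infixl:70 " ∖ " => SBA.diff

variable {S : Type u} [SBA S]

/-- Green's relation `D`: `x D y` iff `x⋏y⋏x = x` and `y⋏x⋏y = y`. -/
def Drel (x y : S) : Prop := x ⋏ y ⋏ x = x ∧ y ⋏ x ⋏ y = y

/-- The natural partial order: `x ≤ y` iff `x⋏y = x = y⋏x`. -/
def nle (x y : S) : Prop := x ⋏ y = x ∧ y ⋏ x = x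

/-- An atom: a nonzero element with nothing strictly between it and `0`. -/
def IsAtom (a : S) : Prop := a ≠ zero ∧ ∀ x : S, nle x a → x = zero ∨ x = a

/-- `X` generates `S`: the only subset of `S` containing `X` and `0` and closed
under the three operations is `S` itself. -/
def Generates (X : Set S) : Prop :=
  ∀ T : Set S, X ⊆ T → zero ∈ T →
    (∀ a b : S, a ∈ T → b ∈ T → a ⋏ b ∈ T ∧ a ⋎ b ∈ T ∧ a ∖ b ∈ T) →
    T = Set.univ

/-- A homomorphism of skew Boolean algebras. -/
def IsHom {T : Type u} [SBA T] (f : S → T) : Prop :=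
  (∀ a b : S, f (a ⋏ b) = f a ⋏ f b) ∧ (∀ a b : S, f (a ⋎ b) = f a ⋎ f b) ∧
    (∀ a b : S, f (a ∖ b) = f a ∖ f b) ∧ f zero = zero

end SBA

open SBA

/-- A left-handed skew Boolean algebra. -/
class LeftHanded (S : Type u) [SBA S] : Prop where
  lh_wedge : ∀ x y : S, x ⋏ y ⋏ x = x ⋏ y
  lh_vee : ∀ x y : S, x ⋎ y ⋎ x = y ⋎ x

/-- `S` is freely generated by `X` over the variety of all skew Boolean algebras. -/
def FreelyGenerates (S : Type u) [SBA S] (X : Set S) : Prop :=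
  Generates X ∧
    ∀ (T : Type u) [SBA T], ∀ g : X → T,
      ∃ f : S → T, IsHom f ∧ ∀ x : X, f x = g x

/-- `S` is freely generated by `X` over the variety of left-handed skew Boolean algebras. -/
def LFreelyGenerates (S : Type u) [SBA S] [LeftHanded S] (X : Set S) : Prop :=
  Generates X ∧
    ∀ (T : Type u) [SBA T] [LeftHanded T], ∀ g : X → T,
      ∃ f : S → T, IsHom f ∧ ∀ x : X, f x = g x

namespace SBAaux

open SBA
set_option linter.unusedSectionVars false
set_option maxHeartbeats 1000000

section Lemmas
variable {S : Type u} [SBA S] [LeftHanded S]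

local notation "𝟬" => (SBA.zero : S)

theorem lhw (a b : S) : a ⋏ b ⋏ a = a ⋏ b := LeftHanded.lh_wedge a b
theorem lhv (a b : S) : a ⋎ b ⋎ a = b ⋎ a := LeftHanded.lh_vee a b

theorem wedge_self (a : S) : a ⋏ a = a := by
  have := SBA.absorb1 a 𝟬; rwa [SBA.vee_zero] at this

theorem vee_self (a : S) : a ⋎ a = a := by
  have := SBA.absorb4 a a; rwa [wedge_self] at this

theorem labs5 (a b : S) : a ⋏ (b ⋎ a) = a := by
  have h : b ⋎ a = a ⋎ (b ⋎ a) := by rw [← SBA.vee_assoc, lhv]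
  rw [h, SBA.absorb1]

theorem labs6 (a b : S) : (a ⋏ b) ⋎ a = a := by
  calc (a ⋏ b) ⋎ a = (a ⋏ b) ⋎ (a ⋏ a) := by rw [wedge_self]
    _ = a ⋏ (b ⋎ a) := (SBA.sdistrib1 a b a).symm
    _ = a := labs5 a b

theorem eq_zero_left_of_vee {a b : S} (h : a ⋎ b = 𝟬) : a = 𝟬 := by
  have := SBA.absorb1 a b; rw [h, SBA.wedge_zero] at this; exact this.symm

theorem eq_zero_right_of_vee {a b : S} (h : a ⋎ b = 𝟬) : b = 𝟬 := by
  have := SBA.absorb2 b a; rw [h, SBA.zero_wedge] at this; exact this.symm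

/-- split: `(x⋏y) ⋎ (x∖y) = x`. -/
theorem split (a b : S) : (a ⋏ b) ⋎ (a ∖ b) = a := by
  have := SBA.diff_ax1 a b; rwa [lhw] at this

theorem meet_diff_zero (a b : S) : (a ⋏ b) ⋏ (a ∖ b) = 𝟬 := by
  have := SBA.diff_ax2 a b; rwa [lhw] at this

theorem diff_meet_zero (a b : S) : (a ∖ b) ⋏ (a ⋏ b) = 𝟬 := by
  have := SBA.diff_ax3 a b; rwa [lhw] at this

/-- if `a⋏b = 0` then `a∖b = a`. -/
theorem diff_of_meet_zero {a b : S} (h : a ⋏ b = 𝟬) : a ∖ b = a := by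
  have := split a b; rwa [h, SBA.zero_vee] at this

/-- if `a⋏b = a` then `a∖b = 0`. -/
theorem diff_of_meet_self {a b : S} (h : a ⋏ b = a) : a ∖ b = 𝟬 := by
  have h1 : a ⋎ (a ∖ b) = a := by have := split a b; rwa [h] at this
  have h2 : a ⋏ (a ∖ b) = 𝟬 := by have := meet_diff_zero a b; rwa [h] at this
  have h3 := SBA.absorb2 (a ∖ b) a
  rw [h1, h2] at h3; exact h3.symm

theorem diff_zero' (a : S) : a ∖ 𝟬 = a := diff_of_meet_zero (SBA.wedge_zero a)

theorem zero_diff (a : S) : 𝟬 ∖ a = 𝟬 := diff_of_meet_self (SBA.zero_wedge a)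

theorem diff_self (a : S) : a ∖ a = 𝟬 := diff_of_meet_self (wedge_self a)

/-- orthogonal commutation: `y⋏x = 0 → x⋎y = y⋎x`. -/
theorem comm0 {a b : S} (h : b ⋏ a = 𝟬) : a ⋎ b = b ⋎ a := by
  have h1 : (a ⋎ b) ⋏ a = a := by
    rw [SBA.sdistrib2, wedge_self, h, SBA.vee_zero]
  have h2 := SBA.absorb3 (a ⋎ b) a
  rw [h1] at h2
  calc a ⋎ b = (a ⋎ b) ⋎ a := h2.symm
    _ = b ⋎ a := lhv a b

/-- `(x∖y)⋏x = x∖y`. -/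
theorem diff_wedge_left (a b : S) : (a ∖ b) ⋏ a = a ∖ b := by
  calc (a ∖ b) ⋏ a = (a ∖ b) ⋏ ((a ⋏ b) ⋎ (a ∖ b)) := by rw [split]
    _ = ((a ∖ b) ⋏ (a ⋏ b)) ⋎ ((a ∖ b) ⋏ (a ∖ b)) := SBA.sdistrib1 _ _ _
    _ = a ∖ b := by rw [diff_meet_zero, SBA.zero_vee, wedge_self]

/-- `x⋏(x∖y) = x∖y`. -/
theorem wedge_diff_right (a b : S) : a ⋏ (a ∖ b) = a ∖ b := by
  calc a ⋏ (a ∖ b) = ((a ⋏ b) ⋎ (a ∖ b)) ⋏ (a ∖ b) := by rw [split]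
    _ = ((a ⋏ b) ⋏ (a ∖ b)) ⋎ ((a ∖ b) ⋏ (a ∖ b)) := SBA.sdistrib2 _ _ _
    _ = a ∖ b := by rw [meet_diff_zero, SBA.zero_vee, wedge_self]

/-- `(x∖y)⋏y = 0`. -/
theorem diff_wedge_sub (a b : S) : (a ∖ b) ⋏ b = 𝟬 := by
  have : (a ∖ b) ⋏ (a ⋏ b) = 𝟬 := diff_meet_zero a b
  calc (a ∖ b) ⋏ b = ((a ∖ b) ⋏ a) ⋏ b := by rw [diff_wedge_left]
    _ = (a ∖ b) ⋏ (a ⋏ b) := SBA.wedge_assoc _ _ _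
    _ = 𝟬 := this

/-- `y⋏(x∖y) = 0`. -/
theorem sub_wedge_diff (a b : S) : b ⋏ (a ∖ b) = 𝟬 := by
  calc b ⋏ (a ∖ b) = b ⋏ (a ⋏ (a ∖ b)) := by rw [wedge_diff_right]
    _ = (b ⋏ a) ⋏ (a ∖ b) := (SBA.wedge_assoc _ _ _).symm
    _ = (b ⋏ a ⋏ b) ⋏ (a ∖ b) := by rw [lhw]
    _ = b ⋏ ((a ⋏ b) ⋏ (a ∖ b)) := by
          rw [SBA.wedge_assoc (b ⋏ a) b (a ∖ b), SBA.wedge_assoc b a (b ⋏ (a ∖ b))]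
          rw [← SBA.wedge_assoc a b (a ∖ b)]
    _ = 𝟬 := by rw [meet_diff_zero, SBA.wedge_zero]

/-- L9: `a⋏c = 0 → (a⋏b)⋏c = 0`. -/
theorem wedge_wedge_zero {a c : S} (b : S) (h : a ⋏ c = 𝟬) : (a ⋏ b) ⋏ c = 𝟬 := by
  calc (a ⋏ b) ⋏ c = (a ⋏ b ⋏ a) ⋏ c := by rw [lhw]
    _ = (a ⋏ b) ⋏ (a ⋏ c) := by rw [SBA.wedge_assoc, SBA.wedge_assoc]
    _ = 𝟬 := by rw [h, SBA.wedge_zero]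

/-- uniqueness of complements. -/
theorem diff_unique {a b e : S} (h1 : (a ⋏ b) ⋎ e = a) (h2 : (a ⋏ b) ⋏ e = 𝟬)
    (h3 : e ⋏ (a ⋏ b) = 𝟬) : e = a ∖ b := by
  have hd : a ⋏ (a ∖ b) = a ∖ b := wedge_diff_right a b
  have hde : a ∖ b = e ⋏ (a ∖ b) := by
    calc a ∖ b = a ⋏ (a ∖ b) := hd.symm
      _ = ((a ⋏ b) ⋎ e) ⋏ (a ∖ b) := by rw [h1]
      _ = ((a ⋏ b) ⋏ (a ∖ b)) ⋎ (e ⋏ (a ∖ b)) := SBA.sdistrib2 _ _ _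
      _ = e ⋏ (a ∖ b) := by rw [meet_diff_zero, SBA.zero_vee]
  have hea : e ⋏ a = e := by
    calc e ⋏ a = e ⋏ ((a ⋏ b) ⋎ e) := by rw [h1]
      _ = (e ⋏ (a ⋏ b)) ⋎ (e ⋏ e) := SBA.sdistrib1 _ _ _
      _ = e := by rw [h3, SBA.zero_vee, wedge_self]
  calc e = e ⋏ a := hea.symm
    _ = e ⋏ ((a ⋏ b) ⋎ (a ∖ b)) := by rw [split]
    _ = (e ⋏ (a ⋏ b)) ⋎ (e ⋏ (a ∖ b)) := SBA.sdistrib1 _ _ _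
    _ = e ⋏ (a ∖ b) := by rw [h3, SBA.zero_vee]
    _ = a ∖ b := hde.symm

/-- the difference depends only on the meet. -/
theorem diff_congr {a b b' : S} (h : a ⋏ b = a ⋏ b') : a ∖ b = a ∖ b' := by
  refine (diff_unique ?_ ?_ ?_).symm
  · rw [h, split]
  · rw [h]; exact meet_diff_zero a b'
  · rw [h]; exact diff_meet_zero a b' 

end Lemmas
end SBAaux
namespace SBAaux
open SBA
section Lemmas2
set_option linter.unusedSectionVars false
variable {S : Type u} [SBA S] [LeftHanded S]
local notation "𝟬" => (SBA.zero : S)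

/-- N1 : `x⋏y⋏z = x⋏z⋏y⋏z`. -/
theorem N1 (a b c : S) : (a ⋏ b) ⋏ c = ((a ⋏ c) ⋏ b) ⋏ c := by
  have hsplit : a = (a ⋏ c) ⋎ (a ∖ c) := (split a c).symm
  have h0 : (a ∖ c) ⋏ (b ⋏ c) = 𝟬 := by
    have := wedge_wedge_zero b (diff_wedge_sub a c)
    rw [SBA.wedge_assoc] at this; exact this
  calc (a ⋏ b) ⋏ c = a ⋏ (b ⋏ c) := SBA.wedge_assoc _ _ _
    _ = ((a ⋏ c) ⋎ (a ∖ c)) ⋏ (b ⋏ c) := by rw [← hsplit]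
    _ = ((a ⋏ c) ⋏ (b ⋏ c)) ⋎ ((a ∖ c) ⋏ (b ⋏ c)) := SBA.sdistrib2 _ _ _
    _ = (a ⋏ c) ⋏ (b ⋏ c) := by rw [h0, SBA.vee_zero]
    _ = ((a ⋏ c) ⋏ b) ⋏ c := (SBA.wedge_assoc _ _ _).symm

/-- left normality: `x⋏y⋏z = x⋏z⋏y`. -/
theorem wedge_normal (a b c : S) : (a ⋏ b) ⋏ c = (a ⋏ c) ⋏ b := by
  symm
  have h1 : (a ⋏ c) ⋏ b = ((a ⋏ b) ⋏ c) ⋏ b := N1 a c b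
  have h2 : (a ⋏ (b ⋏ c)) ⋏ b = ((a ⋏ b) ⋏ (b ⋏ c)) ⋏ b := N1 a (b ⋏ c) b
  have h3 : ((a ⋏ b) ⋏ (b ⋏ c)) ⋏ b = (a ⋏ b) ⋏ ((b ⋏ c) ⋏ b) := SBA.wedge_assoc _ _ _
  have h4 : (b ⋏ c) ⋏ b = b ⋏ c := lhw b c
  calc (a ⋏ c) ⋏ b = ((a ⋏ b) ⋏ c) ⋏ b := h1
    _ = (a ⋏ (b ⋏ c)) ⋏ b := by rw [SBA.wedge_assoc a b c]
    _ = ((a ⋏ b) ⋏ (b ⋏ c)) ⋏ b := h2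
    _ = (a ⋏ b) ⋏ ((b ⋏ c) ⋏ b) := h3
    _ = (a ⋏ b) ⋏ (b ⋏ c) := by rw [h4]
    _ = ((a ⋏ b) ⋏ b) ⋏ c := (SBA.wedge_assoc _ _ _).symm
    _ = (a ⋏ b) ⋏ c := by rw [SBA.wedge_assoc a b b, wedge_self]

/-- `w⋏(a⋎b) = w⋏(b⋎a)`. -/
theorem wedge_vee_comm (w a b : S) : w ⋏ (a ⋎ b) = w ⋏ (b ⋎ a) := by
  set z1 := w ⋏ (a ⋎ b) with hz1
  set z2 := w ⋏ (b ⋎ a) with hz2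
  have key : ∀ p q : S, (w ⋏ (p ⋎ q)) ⋏ (w ⋏ (q ⋎ p)) = w ⋏ (p ⋎ q) := by
    intro p q
    calc (w ⋏ (p ⋎ q)) ⋏ (w ⋏ (q ⋎ p))
        = ((w ⋏ (p ⋎ q)) ⋏ w) ⋏ (q ⋎ p) := (SBA.wedge_assoc _ _ _).symm
      _ = (w ⋏ (p ⋎ q)) ⋏ (q ⋎ p) := by rw [lhw]
      _ = w ⋏ ((p ⋎ q) ⋏ (q ⋎ p)) := SBA.wedge_assoc _ _ _
      _ = w ⋏ ((p ⋏ (q ⋎ p)) ⋎ (q ⋏ (q ⋎ p))) := by rw [SBA.sdistrib2]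
      _ = w ⋏ (p ⋎ q) := by rw [labs5, SBA.absorb1]
  have h12 : z1 ⋏ z2 = z1 := key a b
  have h21 : z2 ⋏ z1 = z2 := key b a
  -- d2 := w ∖ z2
  have hd2w : (w ∖ z2) ⋏ w = w ∖ z2 := diff_wedge_left w z2
  have hd2z2 : (w ∖ z2) ⋏ z2 = 𝟬 := diff_wedge_sub w z2
  have hd2ba : (w ∖ z2) ⋏ (b ⋎ a) = 𝟬 := by
    calc (w ∖ z2) ⋏ (b ⋎ a) = ((w ∖ z2) ⋏ w) ⋏ (b ⋎ a) := by rw [hd2w]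
      _ = (w ∖ z2) ⋏ z2 := SBA.wedge_assoc _ _ _
      _ = 𝟬 := hd2z2
  have hd2a : (w ∖ z2) ⋏ a = 𝟬 := by
    have := hd2ba
    rw [SBA.sdistrib1] at this
    exact eq_zero_right_of_vee this
  have hd2b : (w ∖ z2) ⋏ b = 𝟬 := by
    have := hd2ba
    rw [SBA.sdistrib1] at this
    exact eq_zero_left_of_vee this
  have hd2z1 : (w ∖ z2) ⋏ z1 = 𝟬 := by
    calc (w ∖ z2) ⋏ z1 = ((w ∖ z2) ⋏ w) ⋏ (a ⋎ b) := (SBA.wedge_assoc _ _ _).symm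
      _ = (w ∖ z2) ⋏ (a ⋎ b) := by rw [hd2w]
      _ = ((w ∖ z2) ⋏ a) ⋎ ((w ∖ z2) ⋏ b) := SBA.sdistrib1 _ _ _
      _ = 𝟬 := by rw [hd2a, hd2b, SBA.vee_zero]
  have hwz2 : w ⋏ z2 = z2 := by
    rw [hz2, ← SBA.wedge_assoc, wedge_self]
  have hwz1 : w ⋏ z1 = z1 := by
    rw [hz1, ← SBA.wedge_assoc, wedge_self]
  have hsplit : z2 ⋎ (w ∖ z2) = w := by
    have := split w z2; rwa [hwz2] at this
  calc z1 = w ⋏ z1 := hwz1.symm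
    _ = (z2 ⋎ (w ∖ z2)) ⋏ z1 := by rw [hsplit]
    _ = (z2 ⋏ z1) ⋎ ((w ∖ z2) ⋏ z1) := SBA.sdistrib2 _ _ _
    _ = z2 := by rw [h21, hd2z1, SBA.vee_zero]

/-- `x∖(y⋎z) = (x∖y)∖z`. -/
theorem diff_vee (a b c : S) : a ∖ (b ⋎ c) = (a ∖ b) ∖ c := by
  set e := (a ∖ b) ∖ c with he
  have hea : e ⋏ a = e := by
    calc e ⋏ a = (e ⋏ (a ∖ b)) ⋏ a := by rw [diff_wedge_left]
      _ = e ⋏ ((a ∖ b) ⋏ a) := SBA.wedge_assoc _ _ _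
      _ = e ⋏ (a ∖ b) := by rw [diff_wedge_left]
      _ = e := diff_wedge_left _ _
  have heb : e ⋏ b = 𝟬 := by
    calc e ⋏ b = (e ⋏ (a ∖ b)) ⋏ b := by rw [diff_wedge_left]
      _ = e ⋏ ((a ∖ b) ⋏ b) := SBA.wedge_assoc _ _ _
      _ = 𝟬 := by rw [diff_wedge_sub, SBA.wedge_zero]
  have hec : e ⋏ c = 𝟬 := diff_wedge_sub _ _
  have hm : a ⋏ (b ⋎ c) = (a ⋏ b) ⋎ (a ⋏ c) := SBA.sdistrib1 _ _ _
  refine (diff_unique ?_ ?_ ?_).symm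
  · -- (a ⋏ (b⋎c)) ⋎ e = a
    rw [hm]
    have hxz : a ⋏ c = ((a ⋏ b) ⋏ c) ⋎ ((a ∖ b) ⋏ c) := by
      calc a ⋏ c = ((a ⋏ b) ⋎ (a ∖ b)) ⋏ c := by rw [split]
        _ = ((a ⋏ b) ⋏ c) ⋎ ((a ∖ b) ⋏ c) := SBA.sdistrib2 _ _ _
    rw [hxz]
    have habs : (a ⋏ b) ⋎ ((a ⋏ b) ⋏ c) = a ⋏ b := SBA.absorb3 _ _
    calc ((a ⋏ b) ⋎ (((a ⋏ b) ⋏ c) ⋎ ((a ∖ b) ⋏ c))) ⋎ e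
        = (((a ⋏ b) ⋎ ((a ⋏ b) ⋏ c)) ⋎ ((a ∖ b) ⋏ c)) ⋎ e := by
          rw [SBA.vee_assoc (a ⋏ b) ((a ⋏ b) ⋏ c) ((a ∖ b) ⋏ c)]
      _ = ((a ⋏ b) ⋎ ((a ∖ b) ⋏ c)) ⋎ e := by rw [habs]
      _ = (a ⋏ b) ⋎ (((a ∖ b) ⋏ c) ⋎ e) := SBA.vee_assoc _ _ _
      _ = (a ⋏ b) ⋎ (((a ∖ b) ⋏ c) ⋎ ((a ∖ b) ∖ c)) := by rw [he]
      _ = (a ⋏ b) ⋎ (a ∖ b) := by rw [split]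
      _ = a := split a b
  · -- (a ⋏ (b⋎c)) ⋏ e = 0
    rw [hm, SBA.sdistrib2]
    have h1 : (a ⋏ b) ⋏ e = 𝟬 := by
      calc (a ⋏ b) ⋏ e = (a ⋏ b) ⋏ ((a ∖ b) ⋏ e) := by rw [wedge_diff_right]
        _ = ((a ⋏ b) ⋏ (a ∖ b)) ⋏ e := (SBA.wedge_assoc _ _ _).symm
        _ = 𝟬 := by rw [meet_diff_zero, SBA.zero_wedge]
    have h2 : (a ⋏ c) ⋏ e = 𝟬 := by
      calc (a ⋏ c) ⋏ e = a ⋏ (c ⋏ e) := SBA.wedge_assoc _ _ _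
        _ = 𝟬 := by rw [sub_wedge_diff, SBA.wedge_zero]
    rw [h1, h2, SBA.vee_zero]
  · -- e ⋏ (a ⋏ (b⋎c)) = 0
    rw [hm, SBA.sdistrib1]
    have h1 : e ⋏ (a ⋏ b) = 𝟬 := by
      calc e ⋏ (a ⋏ b) = (e ⋏ a) ⋏ b := (SBA.wedge_assoc _ _ _).symm
        _ = 𝟬 := by rw [hea, heb]
    have h2 : e ⋏ (a ⋏ c) = 𝟬 := by
      calc e ⋏ (a ⋏ c) = (e ⋏ a) ⋏ c := (SBA.wedge_assoc _ _ _).symm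
        _ = 𝟬 := by rw [hea, hec]
    rw [h1, h2, SBA.vee_zero]

/-- `(p⋎q)∖r = (p∖r)⋎(q∖r)`. -/
theorem vee_diff (p q r : S) : (p ⋎ q) ∖ r = (p ∖ r) ⋎ (q ∖ r) := by
  set e := (p ∖ r) ⋎ (q ∖ r) with he
  have hm : (p ⋎ q) ⋏ r = (p ⋏ r) ⋎ (q ⋏ r) := SBA.sdistrib2 _ _ _
  have hdx : ∀ u v : S, (u ∖ r) ⋏ (v ⋏ r) = 𝟬 := by
    intro u v
    calc (u ∖ r) ⋏ (v ⋏ r) = ((u ∖ r) ⋏ v) ⋏ r := (SBA.wedge_assoc _ _ _).symm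
      _ = 𝟬 := wedge_wedge_zero v (diff_wedge_sub u r)
  have hxd : ∀ u v : S, (u ⋏ r) ⋏ (v ∖ r) = 𝟬 := by
    intro u v
    calc (u ⋏ r) ⋏ (v ∖ r) = u ⋏ (r ⋏ (v ∖ r)) := SBA.wedge_assoc _ _ _
      _ = 𝟬 := by rw [sub_wedge_diff, SBA.wedge_zero]
  refine (diff_unique ?_ ?_ ?_).symm
  · -- ((p⋎q)⋏r) ⋎ e = p⋎q
    rw [hm]
    have hcomm : (q ⋏ r) ⋎ (p ∖ r) = (p ∖ r) ⋎ (q ⋏ r) := comm0 (hdx p q)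
    calc ((p ⋏ r) ⋎ (q ⋏ r)) ⋎ ((p ∖ r) ⋎ (q ∖ r))
        = (p ⋏ r) ⋎ (((q ⋏ r) ⋎ (p ∖ r)) ⋎ (q ∖ r)) := by
          rw [SBA.vee_assoc, SBA.vee_assoc]
      _ = (p ⋏ r) ⋎ (((p ∖ r) ⋎ (q ⋏ r)) ⋎ (q ∖ r)) := by rw [hcomm]
      _ = ((p ⋏ r) ⋎ (p ∖ r)) ⋎ ((q ⋏ r) ⋎ (q ∖ r)) := by
          rw [SBA.vee_assoc, SBA.vee_assoc]
      _ = p ⋎ q := by rw [split, split]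
  · rw [hm, SBA.sdistrib2, he, SBA.sdistrib1, SBA.sdistrib1]
    rw [hxd p p, hxd p q, hxd q p, hxd q q]
    simp only [SBA.vee_zero, SBA.zero_vee]
  · rw [hm, he, SBA.sdistrib2, SBA.sdistrib1, SBA.sdistrib1]
    rw [hdx p p, hdx p q, hdx q p, hdx q q]
    simp only [SBA.vee_zero, SBA.zero_vee]

/-- `(x∖u)⋏b = (x⋏b)∖u`. -/
theorem diff_wedge_swap (a u b : S) : (a ∖ u) ⋏ b = (a ⋏ b) ∖ u := by
  set e := (a ∖ u) ⋏ b with he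
  have h2 : ((a ⋏ b) ⋏ u) ⋏ e = 𝟬 := by
    calc ((a ⋏ b) ⋏ u) ⋏ e = (((a ⋏ b) ⋏ u) ⋏ (a ∖ u)) ⋏ b := (SBA.wedge_assoc _ _ _).symm
      _ = ((a ⋏ b) ⋏ (u ⋏ (a ∖ u))) ⋏ b := by rw [SBA.wedge_assoc (a ⋏ b) u (a ∖ u)]
      _ = 𝟬 := by rw [sub_wedge_diff, SBA.wedge_zero, SBA.zero_wedge]
  have heu : e ⋏ u = 𝟬 := by
    calc e ⋏ u = ((a ∖ u) ⋏ b) ⋏ u := rfl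
      _ = 𝟬 := wedge_wedge_zero b (diff_wedge_sub a u)
  have h3 : e ⋏ ((a ⋏ b) ⋏ u) = 𝟬 := by
    calc e ⋏ ((a ⋏ b) ⋏ u) = (e ⋏ (a ⋏ b)) ⋏ u := (SBA.wedge_assoc _ _ _).symm
      _ = 𝟬 := wedge_wedge_zero (a ⋏ b) heu
  have h1 : ((a ⋏ b) ⋏ u) ⋎ e = a ⋏ b := by
    have hnorm : (a ⋏ b) ⋏ u = (a ⋏ u) ⋏ b := wedge_normal a b u
    calc ((a ⋏ b) ⋏ u) ⋎ e = ((a ⋏ u) ⋏ b) ⋎ ((a ∖ u) ⋏ b) := by rw [hnorm, he]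
      _ = ((a ⋏ u) ⋎ (a ∖ u)) ⋏ b := (SBA.sdistrib2 _ _ _).symm
      _ = a ⋏ b := by rw [split]
  exact diff_unique h1 h2 h3

/-- `(a∖b)∖c = (a∖c)∖b`. -/
theorem diff_diff_comm (a b c : S) : (a ∖ b) ∖ c = (a ∖ c) ∖ b := by
  rw [← diff_vee, ← diff_vee]
  exact diff_congr (wedge_vee_comm a b c)

end Lemmas2
end SBAaux
namespace SBAaux
open SBA
section JS
set_option linter.unusedSectionVars false
variable {S : Type u} [SBA S] [LeftHanded S]
local notation "𝟬" => (SBA.zero : S)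

/-- join of a list. -/
def JS : List S → S := fun l => l.foldr (fun a b => a ⋎ b) 𝟬

@[simp] theorem JS_nil : JS ([] : List S) = 𝟬 := rfl
@[simp] theorem JS_cons (a : S) (l : List S) : JS (a :: l) = a ⋎ JS l := rfl

theorem JS_append (l1 l2 : List S) : JS (l1 ++ l2) = JS l1 ⋎ JS l2 := by
  induction l1 with
  | nil => simp [SBA.zero_vee]
  | cons a l ih => simp [ih, SBA.vee_assoc]

theorem JS_all_zero {l : List S} (h : ∀ b ∈ l, b = 𝟬) : JS l = 𝟬 := by
  induction l with
  | nil => rfl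
  | cons a l ih =>
      rw [JS_cons, h a (List.mem_cons_self), ih (fun b hb => h b (List.mem_cons_of_mem a hb)),
        SBA.vee_zero]

theorem JS_eq_zero {l : List S} (h : JS l = 𝟬) : ∀ b ∈ l, b = 𝟬 := by
  induction l with
  | nil => simp
  | cons a l ih =>
      rw [JS_cons] at h
      intro b hb
      rcases List.mem_cons.1 hb with rfl | hb
      · exact eq_zero_left_of_vee h
      · exact ih (eq_zero_right_of_vee h) b hb

theorem wedge_JS (a : S) (l : List S) : a ⋏ JS l = JS (l.map (fun b => a ⋏ b)) := by
  induction l with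
  | nil => simp [SBA.wedge_zero]
  | cons b l ih => simp [SBA.sdistrib1, ih]

theorem JS_wedge (a : S) (l : List S) : JS l ⋏ a = JS (l.map (fun b => b ⋏ a)) := by
  induction l with
  | nil => simp [SBA.zero_wedge]
  | cons b l ih => simp [SBA.sdistrib2, ih]

theorem JS_orth {l1 l2 : List S} (h : ∀ p ∈ l1, ∀ q ∈ l2, p ⋏ q = 𝟬) :
    JS l1 ⋏ JS l2 = 𝟬 := by
  rw [JS_wedge]
  apply JS_all_zero
  intro b hb
  rcases List.mem_map.1 hb with ⟨p, hp, rfl⟩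
  rw [wedge_JS]
  apply JS_all_zero
  intro c hc
  rcases List.mem_map.1 hc with ⟨q, hq, rfl⟩
  exact h p hp q hq

/-- a single commuting element moves across a join. -/
theorem vee_JS_comm {a : S} {l : List S} (h : ∀ b ∈ l, a ⋎ b = b ⋎ a) :
    a ⋎ JS l = JS l ⋎ a := by
  induction l with
  | nil => rw [JS_nil, SBA.zero_vee, SBA.vee_zero]
  | cons b l ih =>
      have hb := h b (List.mem_cons_self)
      have ih' := ih (fun c hc => h c (List.mem_cons_of_mem b hc))
      rw [JS_cons, ← SBA.vee_assoc, hb, SBA.vee_assoc, ih', ← SBA.vee_assoc]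

theorem JS_erase_map {α : Type v} [DecidableEq α] (h : α → S) {l : List α} {a : α}
    (ha : a ∈ l)
    (hcomm : ∀ b ∈ l, ∀ c ∈ l, h b ⋎ h c = h c ⋎ h b) :
    JS (l.map h) = h a ⋎ JS ((l.erase a).map h) := by
  induction l with
  | nil => simp at ha
  | cons b l ih =>
      by_cases hab : b = a
      · subst hab; rw [List.erase_cons_head]; rfl
      · have ha' : a ∈ l := by
          rcases List.mem_cons.1 ha with h | h
          · exact absurd h.symm hab
          · exact h
        rw [List.erase_cons_tail (by simp [hab])]
        calc JS ((b :: l).map h) = h b ⋎ JS (l.map h) := rfl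
          _ = h b ⋎ (h a ⋎ JS ((l.erase a).map h)) := by
              rw [ih ha' (fun c hc d hd =>
                hcomm c (List.mem_cons_of_mem b hc) d (List.mem_cons_of_mem b hd))]
          _ = (h b ⋎ h a) ⋎ JS ((l.erase a).map h) := (SBA.vee_assoc _ _ _).symm
          _ = (h a ⋎ h b) ⋎ JS ((l.erase a).map h) := by
              rw [hcomm b (List.mem_cons_self) a ha]
          _ = h a ⋎ JS (((b :: (l.erase a))).map h) := SBA.vee_assoc _ _ _

theorem JS_perm_map {α : Type v} [DecidableEq α] (h : α → S) {l l' : List α}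
    (hp : l.Perm l')
    (hcomm : ∀ b ∈ l, ∀ c ∈ l, h b ⋎ h c = h c ⋎ h b) :
    JS (l.map h) = JS (l'.map h) := by
  induction l generalizing l' with
  | nil => rw [List.nil_perm] at hp; subst hp; rfl
  | cons a l ih =>
      have ha' : a ∈ l' := hp.mem_iff.1 (List.mem_cons_self)
      have hperm : l.Perm (l'.erase a) := by
        have := List.perm_cons_erase ha'
        exact (List.perm_cons a).1 (hp.trans this)
      have hcomm' : ∀ b ∈ l, ∀ c ∈ l, h b ⋎ h c = h c ⋎ h b := fun b hb c hc =>
        hcomm b (List.mem_cons_of_mem a hb) c (List.mem_cons_of_mem a hc)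
      have hcl : ∀ b ∈ l', ∀ c ∈ l', h b ⋎ h c = h c ⋎ h b := fun b hb c hc =>
        hcomm b (hp.symm.mem_iff.1 hb) c (hp.symm.mem_iff.1 hc)
      calc JS ((a :: l).map h) = h a ⋎ JS (l.map h) := rfl
        _ = h a ⋎ JS ((l'.erase a).map h) := by rw [ih hperm hcomm']
        _ = JS (l'.map h) := (JS_erase_map h ha' hcl).symm

/-- distributing a meet over a permuted join. -/
theorem wedge_JS_perm {l l' : List S} (hp : l.Perm l') (a : S) :
    a ⋏ JS l = a ⋏ JS l' := by
  induction hp with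
  | nil => rfl
  | cons b _ ih => rw [JS_cons, JS_cons, SBA.sdistrib1, SBA.sdistrib1, ih]
  | swap b c l =>
      show a ⋏ (c ⋎ (b ⋎ JS l)) = a ⋏ (b ⋎ (c ⋎ JS l))
      calc a ⋏ (c ⋎ (b ⋎ JS l)) = a ⋏ ((c ⋎ b) ⋎ JS l) := by rw [SBA.vee_assoc]
        _ = (a ⋏ (c ⋎ b)) ⋎ (a ⋏ JS l) := SBA.sdistrib1 _ _ _
        _ = (a ⋏ (b ⋎ c)) ⋎ (a ⋏ JS l) := by rw [wedge_vee_comm a c b]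
        _ = a ⋏ ((b ⋎ c) ⋎ JS l) := (SBA.sdistrib1 _ _ _).symm
        _ = a ⋏ (b ⋎ (c ⋎ JS l)) := by rw [SBA.vee_assoc]
  | trans _ _ ih1 ih2 => rw [ih1, ih2]

theorem diff_JS_perm {l l' : List S} (hp : l.Perm l') (a : S) :
    a ∖ JS l = a ∖ JS l' := diff_congr (wedge_JS_perm hp a)

/-- unzip of splits: `JS us = JS (us.map (·⋏a)) ⋎ JS (us.map (·∖a))`. -/
theorem JS_unzip (a : S) (us : List S) :
    JS us = JS (us.map (fun p => p ⋏ a)) ⋎ JS (us.map (fun p => p ∖ a)) := by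
  induction us with
  | nil => simp [SBA.vee_zero]
  | cons u us ih =>
      have hcomm : ∀ b ∈ us.map (fun p => p ⋏ a), (u ∖ a) ⋎ b = b ⋎ (u ∖ a) := by
        intro b hb
        rcases List.mem_map.1 hb with ⟨p, _, rfl⟩
        refine comm0 ?_
        calc (p ⋏ a) ⋏ (u ∖ a) = p ⋏ (a ⋏ (u ∖ a)) := SBA.wedge_assoc _ _ _
          _ = 𝟬 := by rw [sub_wedge_diff, SBA.wedge_zero]
      calc JS (u :: us) = u ⋎ JS us := rfl
        _ = ((u ⋏ a) ⋎ (u ∖ a)) ⋎ (JS (us.map (fun p => p ⋏ a)) ⋎ JS (us.map (fun p => p ∖ a))) := by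
            rw [split, ← ih]
        _ = (u ⋏ a) ⋎ (((u ∖ a) ⋎ JS (us.map (fun p => p ⋏ a))) ⋎ JS (us.map (fun p => p ∖ a))) := by
            rw [SBA.vee_assoc, SBA.vee_assoc]
        _ = (u ⋏ a) ⋎ ((JS (us.map (fun p => p ⋏ a)) ⋎ (u ∖ a)) ⋎ JS (us.map (fun p => p ∖ a))) := by
            rw [vee_JS_comm hcomm]
        _ = ((u ⋏ a) ⋎ JS (us.map (fun p => p ⋏ a))) ⋎ ((u ∖ a) ⋎ JS (us.map (fun p => p ∖ a))) := by
            rw [SBA.vee_assoc, SBA.vee_assoc]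
        _ = JS ((u :: us).map (fun p => p ⋏ a)) ⋎ JS ((u :: us).map (fun p => p ∖ a)) := rfl

theorem JS_or {w : S} {l : List S} (h : ∀ b ∈ l, b = w ∨ b = 𝟬) :
    JS l = w ∨ JS l = 𝟬 := by
  induction l with
  | nil => exact Or.inr rfl
  | cons b l ih =>
      rcases ih (fun c hc => h c (List.mem_cons_of_mem b hc)) with h1 | h1 <;>
        rcases h b (List.mem_cons_self) with h2 | h2 <;>
          rw [JS_cons, h1, h2]
      · exact Or.inl (vee_self w)
      · exact Or.inl (SBA.zero_vee w)
      · exact Or.inl (SBA.vee_zero w)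
      · exact Or.inr (SBA.vee_zero _)

/-- a join of elements each equal to `w` or `0`, with at least one `w`, equals `w`. -/
theorem JS_of_mem_zero_or {w : S} {l : List S} (hw : w ∈ l)
    (h : ∀ b ∈ l, b = w ∨ b = 𝟬) : JS l = w := by
  rcases JS_or h with h1 | h1
  · exact h1
  · rw [h1, JS_eq_zero h1 w hw]

end JS
end SBAaux
namespace SBAaux
open SBA

/-- The primitive left-handed SBA on `Option γ`. -/
instance instOptionSBA (γ : Type v) : SBA (Option γ) where
  wedge a b := match b with | none => none | some _ => a
  vee a b := match b with | none => a | some _ => b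
  diff a b := match b with | none => a | some _ => none
  zero := none
  wedge_assoc a b c := by cases b <;> cases c <;> rfl
  vee_assoc a b c := by cases b <;> cases c <;> rfl
  absorb1 a b := by cases a <;> cases b <;> rfl
  absorb2 a b := by cases a <;> cases b <;> rfl
  absorb3 a b := by cases a <;> cases b <;> rfl
  absorb4 a b := by cases a <;> cases b <;> rfl
  sdistrib1 a b c := by cases a <;> cases b <;> cases c <;> rfl
  sdistrib2 a b c := by cases a <;> cases b <;> cases c <;> rfl
  zero_wedge a := by cases a <;> rfl
  wedge_zero a := rfl
  zero_vee a := by cases a <;> rfl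
  vee_zero a := rfl
  diff_ax1 a b := by cases a <;> cases b <;> rfl
  diff_ax2 a b := by cases a <;> cases b <;> rfl
  diff_ax3 a b := by cases a <;> cases b <;> rfl

instance instOptionLH (γ : Type v) : LeftHanded (Option γ) where
  lh_wedge a b := by cases a <;> cases b <;> rfl
  lh_vee a b := by cases a <;> cases b <;> rfl

@[simp] theorem opt_zero {γ : Type v} : (SBA.zero : Option γ) = none := rfl
theorem opt_wedge {γ : Type v} (a b : Option γ) :
    a ⋏ b = match b with | none => none | some _ => a := rfl
theorem opt_vee {γ : Type v} (a b : Option γ) :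
    a ⋎ b = match b with | none => a | some _ => b := rfl
theorem opt_diff {γ : Type v} (a b : Option γ) :
    a ∖ b = match b with | none => a | some _ => none := rfl

/-- product of SBAs. -/
instance instPiSBA {η : Type v} (π : η → Type w) [∀ i, SBA (π i)] : SBA (∀ i, π i) where
  wedge a b := fun i => a i ⋏ b i
  vee a b := fun i => a i ⋎ b i
  diff a b := fun i => a i ∖ b i
  zero := fun _ => SBA.zero
  wedge_assoc a b c := funext fun i => SBA.wedge_assoc _ _ _
  vee_assoc a b c := funext fun i => SBA.vee_assoc _ _ _
  absorb1 a b := funext fun i => SBA.absorb1 _ _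
  absorb2 a b := funext fun i => SBA.absorb2 _ _
  absorb3 a b := funext fun i => SBA.absorb3 _ _
  absorb4 a b := funext fun i => SBA.absorb4 _ _
  sdistrib1 a b c := funext fun i => SBA.sdistrib1 _ _ _
  sdistrib2 a b c := funext fun i => SBA.sdistrib2 _ _ _
  zero_wedge a := funext fun i => SBA.zero_wedge _
  wedge_zero a := funext fun i => SBA.wedge_zero _
  zero_vee a := funext fun i => SBA.zero_vee _
  vee_zero a := funext fun i => SBA.vee_zero _
  diff_ax1 a b := funext fun i => SBA.diff_ax1 _ _
  diff_ax2 a b := funext fun i => SBA.diff_ax2 _ _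
  diff_ax3 a b := funext fun i => SBA.diff_ax3 _ _

instance instPiLH {η : Type v} (π : η → Type w) [∀ i, SBA (π i)] [∀ i, LeftHanded (π i)] :
    LeftHanded (∀ i, π i) where
  lh_wedge a b := funext fun i => LeftHanded.lh_wedge _ _
  lh_vee a b := funext fun i => LeftHanded.lh_vee _ _

@[simp] theorem pi_wedge {η : Type v} {π : η → Type w} [∀ i, SBA (π i)]
    (a b : ∀ i, π i) (i : η) : (a ⋏ b) i = a i ⋏ b i := rfl
@[simp] theorem pi_vee {η : Type v} {π : η → Type w} [∀ i, SBA (π i)]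
    (a b : ∀ i, π i) (i : η) : (a ⋎ b) i = a i ⋎ b i := rfl
@[simp] theorem pi_diff {η : Type v} {π : η → Type w} [∀ i, SBA (π i)]
    (a b : ∀ i, π i) (i : η) : (a ∖ b) i = a i ∖ b i := rfl
@[simp] theorem pi_zero {η : Type v} {π : η → Type w} [∀ i, SBA (π i)] (i : η) :
    (SBA.zero : ∀ i, π i) i = SBA.zero := rfl

theorem JS_apply {η : Type v} {π : η → Type w} [∀ i, SBA (π i)]
    [∀ i, LeftHanded (π i)] (l : List (∀ i, π i)) (i : η) :
    JS l i = JS (l.map (fun a => a i)) := by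
  induction l with
  | nil => rfl
  | cons a l ih => simp only [JS_cons, List.map_cons, pi_vee, ih]

end SBAaux
namespace SBAaux
open SBA
section Words
set_option linter.unusedSectionVars false
variable {n : ℕ} {S : Type u} [SBA S] [LeftHanded S] (x : Fin n → S)
local notation "𝟬" => (SBA.zero : S)

/-- meet-word over a list with initial value. -/
def mfold (a : S) (l : List (Fin n)) : S := l.foldl (fun p d => p ⋏ x d) a

@[simp] theorem mfold_nil (a : S) : mfold x a [] = a := rfl
@[simp] theorem mfold_cons (a : S) (d : Fin n) (l : List (Fin n)) :
    mfold x a (d :: l) = mfold x (a ⋏ x d) l := rfl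

theorem mfold_base_congr {a b : S} (h : a = b) (l : List (Fin n)) :
    mfold x a l = mfold x b l := by rw [h]

theorem mfold_swap_base (a : S) (d : Fin n) (l : List (Fin n)) :
    mfold x (a ⋏ x d) l = mfold x a l ⋏ x d := by
  induction l generalizing a with
  | nil => rfl
  | cons e l ih =>
      rw [mfold_cons, mfold_base_congr x (wedge_normal a (x d) (x e)) l, ih, mfold_cons]

theorem mfold_perm {l l' : List (Fin n)} (hp : l.Perm l') (a : S) :
    mfold x a l = mfold x a l' := by
  induction hp generalizing a with
  | nil => rfl
  | cons d _ ih => rw [mfold_cons, mfold_cons, ih]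
  | swap d e l =>
      rw [mfold_cons, mfold_cons, mfold_cons, mfold_cons,
        mfold_base_congr x (wedge_normal a (x e) (x d)) l]
  | trans _ _ ih1 ih2 => rw [ih1, ih2]

theorem mfold_wedge_absorb {a : S} {e : Fin n} {l : List (Fin n)}
    (h : a ⋏ x e = a ∨ e ∈ l) : mfold x a l ⋏ x e = mfold x a l := by
  induction l generalizing a with
  | nil =>
      rcases h with h | h
      · exact h
      · simp at h
  | cons d l ih =>
      rw [mfold_cons]
      by_cases hel : e ∈ l
      · exact ih (Or.inr hel)
      · rcases h with h | h
        · refine ih (Or.inl ?_)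
          rw [wedge_normal, h]
        · rcases List.mem_cons.1 h with rfl | h'
          · refine ih (Or.inl ?_)
            rw [SBA.wedge_assoc, wedge_self]
          · exact absurd h' hel

/-- `b ⋏ mfold a l = b` whenever `b⋏a = b` and `b` absorbs every letter. -/
theorem wedge_mfold_absorb {b a : S} {l : List (Fin n)} (hba : b ⋏ a = b)
    (h : ∀ d ∈ l, b ⋏ x d = b) : b ⋏ mfold x a l = b := by
  induction l generalizing a with
  | nil => exact hba
  | cons d l ih =>
      rw [mfold_cons]
      refine ih ?_ (fun e he => h e (List.mem_cons_of_mem d he))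
      rw [← SBA.wedge_assoc, hba]
      exact h d (List.mem_cons_self)

/-- the word of a set with marked first letter. -/
def wrd (c : Fin n) (l : List (Fin n)) : S := mfold x (x c) l

/-- atom term. -/
def tS (A : Finset (Fin n)) (c : Fin n) : S :=
  wrd x c (A.sort (· ≤ ·)) ∖ JS ((Aᶜ.sort (· ≤ ·)).map x)

theorem wrd_wedge_mem {c e : Fin n} {l : List (Fin n)} (h : e = c ∨ e ∈ l) :
    wrd x c l ⋏ x e = wrd x c l := by
  refine mfold_wedge_absorb x ?_
  rcases h with rfl | h
  · exact Or.inl (wedge_self _)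
  · exact Or.inr h

/-- a word eats another word whose content it contains. -/
theorem wrd_wedge_wrd {c c' : Fin n} {l l' : List (Fin n)}
    (hc : c' = c ∨ c' ∈ l) (hl : ∀ d ∈ l', d = c ∨ d ∈ l) :
    wrd x c l ⋏ wrd x c' l' = wrd x c l := by
  refine wedge_mfold_absorb x (wrd_wedge_mem x hc) ?_
  intro d hd
  exact wrd_wedge_mem x (hl d hd)

end Words
end SBAaux
namespace SBAaux
open SBA
section Atoms
set_option linter.unusedSectionVars false
variable {n : ℕ} {S : Type u} [SBA S] [LeftHanded S] (x : Fin n → S)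
local notation "𝟬" => (SBA.zero : S)

theorem tS_wedge_x_zero {A : Finset (Fin n)} (c : Fin n) {k : Fin n} (hk : k ∉ A) :
    tS x A c ⋏ x k = 𝟬 := by
  have h0 : tS x A c ⋏ JS ((Aᶜ.sort (· ≤ ·)).map x) = 𝟬 := diff_wedge_sub _ _
  rw [wedge_JS] at h0
  refine JS_eq_zero h0 _ ?_
  rw [List.map_map]
  refine List.mem_map.2 ⟨k, ?_, rfl⟩
  rw [Finset.mem_sort]
  simpa using hk

theorem x_wedge_tS_zero {A : Finset (Fin n)} (c : Fin n) {k : Fin n} (hk : k ∉ A) :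
    x k ⋏ tS x A c = 𝟬 := by
  have h0 : JS ((Aᶜ.sort (· ≤ ·)).map x) ⋏ tS x A c = 𝟬 := sub_wedge_diff _ _
  rw [JS_wedge] at h0
  refine JS_eq_zero h0 _ ?_
  rw [List.map_map]
  refine List.mem_map.2 ⟨k, ?_, rfl⟩
  rw [Finset.mem_sort]
  simpa using hk

theorem tS_wedge_wrd {A : Finset (Fin n)} (c : Fin n) :
    tS x A c ⋏ wrd x c (A.sort (· ≤ ·)) = tS x A c := diff_wedge_left _ _

theorem tS_wedge_x_self {A : Finset (Fin n)} (c : Fin n) {k : Fin n} (hk : k ∈ A) :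
    tS x A c ⋏ x k = tS x A c := by
  have hw : wrd x c (A.sort (· ≤ ·)) ⋏ x k = wrd x c (A.sort (· ≤ ·)) :=
    wrd_wedge_mem x (Or.inr ((Finset.mem_sort _).2 hk))
  calc tS x A c ⋏ x k
      = (tS x A c ⋏ wrd x c (A.sort (· ≤ ·))) ⋏ x k := by rw [tS_wedge_wrd]
    _ = tS x A c ⋏ (wrd x c (A.sort (· ≤ ·)) ⋏ x k) := SBA.wedge_assoc _ _ _
    _ = tS x A c := by rw [hw, tS_wedge_wrd]

/-- F1 -/
theorem tS_wedge_tS {A : Finset (Fin n)} {c c' : Fin n} (hc' : c' ∈ A) :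
    tS x A c ⋏ tS x A c' = tS x A c := by
  set N := JS ((Aᶜ.sort (· ≤ ·)).map x) with hN
  set w1 := wrd x c (A.sort (· ≤ ·)) with hw1
  set w2 := wrd x c' (A.sort (· ≤ ·)) with hw2
  have hw12 : w1 ⋏ w2 = w1 :=
    wrd_wedge_wrd x (Or.inr ((Finset.mem_sort _).2 hc')) (fun d hd => Or.inr hd)
  have hd1w1 : tS x A c ⋏ w1 = tS x A c := diff_wedge_left _ _
  have hd1w2 : tS x A c ⋏ w2 = tS x A c := by
    calc tS x A c ⋏ w2 = (tS x A c ⋏ w1) ⋏ w2 := by rw [hd1w1]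
      _ = tS x A c ⋏ (w1 ⋏ w2) := SBA.wedge_assoc _ _ _
      _ = tS x A c := by rw [hw12, hd1w1]
  have hd1N : tS x A c ⋏ N = 𝟬 := diff_wedge_sub _ _
  have hsplit : (w2 ⋏ N) ⋎ tS x A c' = w2 := split w2 N
  symm
  calc tS x A c = tS x A c ⋏ w2 := hd1w2.symm
    _ = tS x A c ⋏ ((w2 ⋏ N) ⋎ tS x A c') := by rw [hsplit]
    _ = (tS x A c ⋏ (w2 ⋏ N)) ⋎ (tS x A c ⋏ tS x A c') := SBA.sdistrib1 _ _ _
    _ = ((tS x A c ⋏ w2) ⋏ N) ⋎ (tS x A c ⋏ tS x A c') := by rw [SBA.wedge_assoc]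
    _ = tS x A c ⋏ tS x A c' := by rw [hd1w2, hd1N, SBA.zero_vee]

/-- F2 -/
theorem tS_orth {A B : Finset (Fin n)} {c c' : Fin n} (hc : c ∈ A) (hc' : c' ∈ B)
    (hAB : A ≠ B) : tS x A c ⋏ tS x B c' = 𝟬 := by
  have hsub : (∃ k, k ∈ B ∧ k ∉ A) ∨ (∃ k, k ∈ A ∧ k ∉ B) := by
    by_contra hcon
    push_neg at hcon
    exact hAB (Finset.Subset.antisymm (fun k hk => hcon.2 k hk) (fun k hk => hcon.1 k hk))
  rcases hsub with ⟨k, hkB, hkA⟩ | ⟨k, hkA, hkB⟩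
  · -- k ∈ B \ A
    set w2 := wrd x c' (B.sort (· ≤ ·)) with hw2
    have h1 : tS x A c ⋏ x k = 𝟬 := tS_wedge_x_zero x c hkA
    have hw2k : w2 ⋏ x k = w2 := wrd_wedge_mem x (Or.inr ((Finset.mem_sort _).2 hkB))
    have hd2 : w2 ⋏ tS x B c' = tS x B c' := wedge_diff_right _ _
    have hd1w2 : tS x A c ⋏ w2 = 𝟬 := by
      have h2 : (tS x A c ⋏ w2) ⋏ x k = 𝟬 := wedge_wedge_zero w2 h1
      calc tS x A c ⋏ w2 = tS x A c ⋏ (w2 ⋏ x k) := by rw [hw2k]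
        _ = (tS x A c ⋏ w2) ⋏ x k := (SBA.wedge_assoc _ _ _).symm
        _ = 𝟬 := h2
    calc tS x A c ⋏ tS x B c' = tS x A c ⋏ (w2 ⋏ tS x B c') := by rw [hd2]
      _ = (tS x A c ⋏ w2) ⋏ tS x B c' := (SBA.wedge_assoc _ _ _).symm
      _ = 𝟬 := by rw [hd1w2, SBA.zero_wedge]
  · -- k ∈ A \ B
    have hd1k : tS x A c ⋏ x k = tS x A c := tS_wedge_x_self x c hkA
    have hk2 : x k ⋏ tS x B c' = 𝟬 := x_wedge_tS_zero x c' hkB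
    calc tS x A c ⋏ tS x B c' = (tS x A c ⋏ x k) ⋏ tS x B c' := by rw [hd1k]
      _ = tS x A c ⋏ (x k ⋏ tS x B c') := SBA.wedge_assoc _ _ _
      _ = 𝟬 := by rw [hk2, SBA.wedge_zero]

/-- F3 -/
theorem tS_vee_tS {A : Finset (Fin n)} {c c' : Fin n} (hc' : c' ∈ A) :
    tS x A c ⋎ tS x A c' = tS x A c' := by
  have h1 := SBA.absorb4 (tS x A c') (tS x A c)
  rwa [tS_wedge_tS (c := c) x hc'] at h1

/-- F5 -/
theorem tS_diff_self {A : Finset (Fin n)} {c c' : Fin n} (hc' : c' ∈ A) :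
    tS x A c ∖ tS x A c' = 𝟬 := diff_of_meet_self (tS_wedge_tS x hc')

/-- F6 -/
theorem tS_diff_orth {A B : Finset (Fin n)} {c c' : Fin n} (hc : c ∈ A) (hc' : c' ∈ B)
    (hAB : A ≠ B) : tS x A c ∖ tS x B c' = tS x A c :=
  diff_of_meet_zero (tS_orth x hc hc' hAB)

/-- commutation of atoms in different classes -/
theorem tS_comm {A B : Finset (Fin n)} {c c' : Fin n} (hc : c ∈ A) (hc' : c' ∈ B)
    (hAB : A ≠ B) : tS x A c ⋎ tS x B c' = tS x B c' ⋎ tS x A c :=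
  comm0 (tS_orth x hc' hc hAB.symm)

end Atoms
end SBAaux
namespace SBAaux
open SBA

theorem sorted_lt_sublist {α : Type v} [LinearOrder α] {l₁ l₂ : List α}
    (h₁ : l₁.Pairwise (· < ·)) (h₂ : l₂.Pairwise (· < ·)) (hsub : ∀ a ∈ l₁, a ∈ l₂) :
    List.Sublist l₁ l₂ := by
  induction l₂ generalizing l₁ with
  | nil =>
      cases l₁ with
      | nil => exact List.Sublist.refl _
      | cons a t => exact absurd (hsub a (List.mem_cons_self)) (by simp)
  | cons b t₂ ih =>
      cases l₁ with
      | nil => exact List.nil_sublist _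
      | cons a t₁ =>
          by_cases hab : a = b
          · subst hab
            refine List.Sublist.cons₂ a (ih h₁.of_cons h₂.of_cons ?_)
            intro e he
            have hae : a < e := List.rel_of_pairwise_cons h₁ he
            rcases List.mem_cons.1 (hsub e (List.mem_cons_of_mem a he)) with heb | h
            · exact absurd (heb ▸ hae) (lt_irrefl e)
            · exact h
          · refine List.Sublist.cons b (ih h₁ h₂.of_cons ?_)
            intro e he
            have heb : e ∈ b :: t₂ := hsub e he
            rcases List.mem_cons.1 heb with heq | h
            · -- e = b ∈ l₁ : derive contradiction
              exfalso
              have hat2 : a ∈ t₂ := by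
                rcases List.mem_cons.1 (hsub a (List.mem_cons_self)) with h' | h'
                · exact absurd h' hab
                · exact h'
              have h1 : b < a := List.rel_of_pairwise_cons h₂ hat2
              rcases List.mem_cons.1 he with heq2 | h'
              · exact hab (heq2.symm.trans heq)
              · exact lt_irrefl e ((heq ▸ h1).trans (List.rel_of_pairwise_cons h₁ h'))
            · exact h

section Expand
set_option linter.unusedSectionVars false
variable {n : ℕ} {S : Type u} [SBA S] [LeftHanded S] (x : Fin n → S)
local notation "𝟬" => (SBA.zero : S)

/-- The master expansion of a generator. -/
theorem gen_expand (c : Fin n) : ∀ (M : List (Fin n)), M.Nodup →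
    x c = JS ((M.sublists').map
      (fun T => wrd x c T ∖ JS ((M.filter (· ∉ T)).map x))) := by
  intro M
  induction M with
  | nil =>
      intro _
      simp only [List.sublists'_nil, List.map_cons, List.map_nil, List.filter_nil, JS_nil]
      rw [JS_cons, JS_nil, SBA.vee_zero, diff_zero']
      rfl
  | cons d M' ih =>
      intro hM
      have hdM' : d ∉ M' := (List.nodup_cons.1 hM).1
      have hM' : M'.Nodup := (List.nodup_cons.1 hM).2
      have IH := ih hM'
      have claimA : ∀ T ∈ M'.sublists',
          wrd x c T ∖ JS (((d :: M').filter (· ∉ T)).map x)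
            = (wrd x c T ∖ JS ((M'.filter (· ∉ T)).map x)) ∖ x d := by
        intro T hT
        have hdT : d ∉ T := fun hmem =>
          hdM' ((List.mem_sublists'.1 hT).subset hmem)
        have hfil : (d :: M').filter (· ∉ T) = d :: M'.filter (· ∉ T) :=
          List.filter_cons_of_pos (by simpa using hdT)
        rw [hfil, List.map_cons, JS_cons, diff_vee, diff_diff_comm]
      have claimB : ∀ T ∈ M'.sublists',
          wrd x c (d :: T) ∖ JS (((d :: M').filter (· ∉ (d :: T))).map x)
            = (wrd x c T ∖ JS ((M'.filter (· ∉ T)).map x)) ⋏ x d := by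
        intro T hT
        have hfil1 : (d :: M').filter (· ∉ (d :: T)) = M'.filter (· ∉ (d :: T)) :=
          List.filter_cons_of_neg (by simp)
        have hfil2 : M'.filter (· ∉ (d :: T)) = M'.filter (· ∉ T) := by
          refine List.filter_congr ?_
          intro e he
          have hed : e ≠ d := fun h => hdM' (h ▸ he)
          simp [List.mem_cons, hed]
        have hwrd : wrd x c (d :: T) = wrd x c T ⋏ x d :=
          mfold_swap_base x (x c) d T
        rw [hfil1, hfil2, hwrd, diff_wedge_swap]
      set u : List (Fin n) → S :=
        fun T => wrd x c T ∖ JS ((M'.filter (· ∉ T)).map x) with hu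
      have horth : ∀ p ∈ (M'.sublists'.map u).map (fun q => q ∖ x d),
          ∀ r ∈ (M'.sublists'.map u).map (fun q => q ⋏ x d), p ⋏ r = 𝟬 := by
        intro p hp r hr
        rcases List.mem_map.1 hp with ⟨p', _, rfl⟩
        rcases List.mem_map.1 hr with ⟨r', _, rfl⟩
        calc (p' ∖ x d) ⋏ (r' ⋏ x d) = ((p' ∖ x d) ⋏ r') ⋏ x d := (SBA.wedge_assoc _ _ _).symm
          _ = 𝟬 := wedge_wedge_zero r' (diff_wedge_sub p' (x d))
      calc x c = JS (M'.sublists'.map u) := IH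
        _ = JS ((M'.sublists'.map u).map (fun q => q ⋏ x d)) ⋎
              JS ((M'.sublists'.map u).map (fun q => q ∖ x d)) := JS_unzip (x d) _
        _ = JS ((M'.sublists'.map u).map (fun q => q ∖ x d)) ⋎
              JS ((M'.sublists'.map u).map (fun q => q ⋏ x d)) := comm0 (JS_orth horth)
        _ = JS (M'.sublists'.map
              (fun T => wrd x c T ∖ JS (((d :: M').filter (· ∉ T)).map x))) ⋎
            JS (M'.sublists'.map
              (fun T => wrd x c (d :: T) ∖ JS (((d :: M').filter (· ∉ (d :: T))).map x))) := by
            rw [List.map_map, List.map_map]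
            congr 1
            · exact congrArg JS (List.map_congr_left fun T hT => (claimA T hT).symm)
            · exact congrArg JS (List.map_congr_left fun T hT => (claimB T hT).symm)
        _ = JS ((d :: M').sublists'.map
              (fun T => wrd x c T ∖ JS (((d :: M').filter (· ∉ T)).map x))) := by
            rw [List.sublists'_cons, List.map_append, JS_append, List.map_map]
            rfl

end Expand
end SBAaux
namespace SBAaux
open SBA
section Expand2
set_option linter.unusedSectionVars false
variable {n : ℕ} {S : Type u} [SBA S] [LeftHanded S] (x : Fin n → S)
local notation "𝟬" => (SBA.zero : S)
local notation "M₀" c => Finset.sort (Finset.erase Finset.univ c) (· ≤ ·)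

theorem expand_term_eq (c : Fin n) {T : List (Fin n)}
    (hT : T ∈ (Finset.sort (Finset.erase Finset.univ c) (· ≤ ·)).sublists') :
    wrd x c T ∖ JS ((((M₀ c).filter (· ∉ T)).map x))
      = tS x (insert c T.toFinset) c := by
  have hTM : T.Sublist (M₀ c) := List.mem_sublists'.1 hT
  have hcT : c ∉ T := fun h => by
    have h2 := hTM.subset h
    rw [Finset.mem_sort] at h2
    exact (Finset.mem_erase.1 h2).1 rfl
  have hTnd : T.Nodup := hTM.nodup (Finset.sort_nodup _ _)
  set A := insert c T.toFinset with hA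
  have hcA : c ∈ A := Finset.mem_insert_self _ _
  -- (a) the word
  have hword : wrd x c (A.sort (· ≤ ·)) = wrd x c T := by
    have hc_sort : c ∈ A.sort (· ≤ ·) := (Finset.mem_sort _).2 hcA
    have perm1 : (A.sort (· ≤ ·)).Perm (c :: (A.sort (· ≤ ·)).erase c) :=
      List.perm_cons_erase hc_sort
    have perm2 : ((A.sort (· ≤ ·)).erase c).Perm T := by
      refine List.perm_of_nodup_nodup_toFinset_eq
        (List.Nodup.erase c (Finset.sort_nodup _ _)) hTnd ?_
      ext k
      rw [List.mem_toFinset, List.mem_toFinset,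
        (Finset.sort_nodup A (· ≤ ·)).mem_erase_iff, Finset.mem_sort, hA]
      constructor
      · rintro ⟨hkc, hk⟩
        rcases Finset.mem_insert.1 hk with rfl | hk2
        · exact absurd rfl hkc
        · exact List.mem_toFinset.1 hk2
      · intro hk
        exact ⟨fun h => hcT (h ▸ hk), Finset.mem_insert.2 (Or.inr (List.mem_toFinset.2 hk))⟩
    calc wrd x c (A.sort (· ≤ ·))
        = mfold x (x c) (c :: (A.sort (· ≤ ·)).erase c) := mfold_perm x perm1 _
      _ = mfold x (x c ⋏ x c) ((A.sort (· ≤ ·)).erase c) := rfl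
      _ = mfold x (x c) ((A.sort (· ≤ ·)).erase c) := mfold_base_congr x (wedge_self _) _
      _ = mfold x (x c) T := mfold_perm x perm2 _
  -- (b) the subtrahend
  have hsubperm : ((M₀ c).filter (· ∉ T)).Perm (Aᶜ.sort (· ≤ ·)) := by
    refine List.perm_of_nodup_nodup_toFinset_eq
      (List.Nodup.filter _ (Finset.sort_nodup _ _)) (Finset.sort_nodup _ _) ?_
    ext k
    rw [List.mem_toFinset, List.mem_toFinset, List.mem_filter, Finset.mem_sort,
      Finset.mem_sort, Finset.mem_compl, hA, Finset.mem_erase]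
    simp only [Finset.mem_univ, and_true, decide_eq_true_eq, Finset.mem_insert,
      List.mem_toFinset, not_or]
    try tauto
  rw [← hword]
  exact diff_JS_perm (List.Perm.map x hsubperm) _

/-- F8: a generator is the join of its atoms. -/
theorem x_eq_JS_tS (c : Fin n) (L : List (Finset (Fin n))) (hL : L.Nodup)
    (hLmem : ∀ B, B ∈ L ↔ c ∈ B) :
    x c = JS (L.map (fun A => tS x A c)) := by
  have hMnd : (M₀ c).Nodup := Finset.sort_nodup _ _
  have h1 := gen_expand x c (M₀ c) hMnd
  have h2 : ((M₀ c).sublists').map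
      (fun T => wrd x c T ∖ JS ((((M₀ c).filter (· ∉ T)).map x)))
      = (((M₀ c).sublists').map (fun T => insert c T.toFinset)).map
          (fun A => tS x A c) := by
    rw [List.map_map]
    exact List.map_congr_left (fun T hT => expand_term_eq x c hT)
  have hperm : ((((M₀ c).sublists').map (fun T => insert c T.toFinset))).Perm L := by
    refine List.perm_of_nodup_nodup_toFinset_eq ?_ hL ?_
    · refine List.Nodup.map_on ?_ (List.nodup_sublists'.2 hMnd)
      intro T hT T' hT' hfe
      have hTM := List.mem_sublists'.1 hT
      have hTM' := List.mem_sublists'.1 hT'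
      have hcT : c ∉ T := fun h => by
        have h2 := hTM.subset h
        rw [Finset.mem_sort] at h2
        exact (Finset.mem_erase.1 h2).1 rfl
      have hcT' : c ∉ T' := fun h => by
        have h2 := hTM'.subset h
        rw [Finset.mem_sort] at h2
        exact (Finset.mem_erase.1 h2).1 rfl
      have hcTf : c ∉ T.toFinset := fun h => hcT (List.mem_toFinset.1 h)
      have hcTf' : c ∉ T'.toFinset := fun h => hcT' (List.mem_toFinset.1 h)
      have htf : T.toFinset = T'.toFinset := by
        rw [← Finset.erase_insert hcTf, ← Finset.erase_insert hcTf', hfe]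
      have hpm : T.Perm T' :=
        List.perm_of_nodup_nodup_toFinset_eq (hTM.nodup hMnd) (hTM'.nodup hMnd) htf
      exact List.Perm.eq_of_pairwise'
        (List.Pairwise.sublist hTM (Finset.pairwise_sort _ _))
        (List.Pairwise.sublist hTM' (Finset.pairwise_sort _ _)) hpm
    · ext B
      simp only [List.mem_toFinset, List.mem_map, hLmem B]
      constructor
      · rintro ⟨T, hT, rfl⟩
        exact Finset.mem_insert_self _ _
      · intro hcB
        refine ⟨(B.erase c).sort (· ≤ ·), ?_, ?_⟩
        · rw [List.mem_sublists']
          refine sorted_lt_sublist (Finset.sortedLT_sort _).pairwise (Finset.sortedLT_sort _).pairwise ?_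
          intro k hk
          rw [Finset.mem_sort] at hk ⊢
          exact Finset.mem_erase.2 ⟨(Finset.mem_erase.1 hk).1, Finset.mem_univ k⟩
        · rw [Finset.sort_toFinset]
          exact Finset.insert_erase hcB
  have hcomm : ∀ B ∈ (((M₀ c).sublists').map (fun T => insert c T.toFinset)),
      ∀ C ∈ (((M₀ c).sublists').map (fun T => insert c T.toFinset)),
      tS x B c ⋎ tS x C c = tS x C c ⋎ tS x B c := by
    intro B hB C hC
    rcases List.mem_map.1 hB with ⟨T, _, rfl⟩
    rcases List.mem_map.1 hC with ⟨T', _, rfl⟩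
    by_cases hBC : insert c T.toFinset = insert c T'.toFinset
    · rw [hBC]
    · exact tS_comm x (Finset.mem_insert_self _ _) (Finset.mem_insert_self _ _) hBC
  rw [h1, h2]
  exact JS_perm_map (fun A => tS x A c) hperm hcomm

end Expand2
end SBAaux
namespace SBAaux
open SBA

abbrev iot (n : ℕ) : Type := {A : Finset (Fin n) // A.Nonempty}
abbrev coordt (n : ℕ) (A : iot n) : Type u := Option (ULift.{u} {c : Fin n // c ∈ A.1})
abbrev Fr (n : ℕ) : Type u := ∀ A : iot n, coordt.{u} n A

noncomputable instance (n : ℕ) : Fintype (iot n) := Subtype.fintype _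

section FSide
set_option linter.unusedSectionVars false
variable {n : ℕ}

/-- the generators of `Fr n`. -/
def gF (c : Fin n) : Fr.{u} n := fun A =>
  if h : c ∈ A.1 then some (ULift.up ⟨c, h⟩) else none

/-- atoms of `Fr n`. -/
def atomF (A : iot n) (c : Fin n) (hc : c ∈ A.1) : Fr.{u} n := fun B =>
  if h : B = A then some (ULift.up ⟨c, h ▸ hc⟩) else none

theorem gF_apply_mem {c : Fin n} {A : iot n} (h : c ∈ A.1) :
    gF.{u} c A = some (ULift.up ⟨c, h⟩) := dif_pos h

theorem gF_apply_not_mem {c : Fin n} {A : iot n} (h : c ∉ A.1) :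
    gF.{u} c A = none := dif_neg h

/-- meet-word in `Fr n`. -/
theorem mfoldF_apply (l : List (Fin n)) (a : Fr.{u} n) (B : iot n) :
    (l.foldl (fun p d => p ⋏ gF d) a) B
      = if ∀ d ∈ l, d ∈ B.1 then a B else none := by
  induction l generalizing a with
  | nil => simp
  | cons d l ih =>
      rw [List.foldl_cons, ih]
      by_cases hd : d ∈ B.1
      · by_cases hl : ∀ e ∈ l, e ∈ B.1
        · have hall : ∀ e ∈ d :: l, e ∈ B.1 := by
            intro e he
            rcases List.mem_cons.1 he with rfl | he'
            · exact hd
            · exact hl e he'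
          rw [if_pos hl, if_pos hall]
          show a B ⋏ gF d B = a B
          rw [gF_apply_mem hd, opt_wedge]
        · rw [if_neg hl, if_neg (fun hall => hl (fun e he => hall e (List.mem_cons_of_mem d he)))]
      · have : ¬ ∀ e ∈ d :: l, e ∈ B.1 := fun hall => hd (hall d (List.mem_cons_self))
        rw [if_neg this]
        by_cases hl : ∀ e ∈ l, e ∈ B.1
        · rw [if_pos hl]
          show a B ⋏ gF d B = none
          rw [gF_apply_not_mem hd, opt_wedge]
        · rw [if_neg hl]

theorem optJS_eq_none_iff {γ : Type v} (l : List (Option γ)) :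
    JS l = none ↔ ∀ o ∈ l, o = none :=
  ⟨fun h => JS_eq_zero h, fun h => JS_all_zero h⟩

/-- the subtrahend join in `Fr n`. -/
theorem JSgF_apply_none_iff (l : List (Fin n)) (B : iot n) :
    (JS (l.map (fun d => gF.{u} d))) B = none ↔ ∀ d ∈ l, d ∉ B.1 := by
  rw [JS_apply, List.map_map]
  rw [optJS_eq_none_iff]
  constructor
  · intro h d hd
    intro hdB
    have := h (gF d B) (List.mem_map.2 ⟨d, hd, rfl⟩)
    rw [gF_apply_mem hdB] at this
    exact Option.some_ne_none _ this
  · intro h o ho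
    rcases List.mem_map.1 ho with ⟨d, hd, rfl⟩
    exact gF_apply_not_mem (h d hd)

end FSide
end SBAaux
namespace SBAaux
open SBA
section HomImage
set_option linter.unusedSectionVars false
variable {n : ℕ} {S : Type u} [SBA S] [LeftHanded S] (x : Fin n → S)
  (f : S → Fr.{u} n) (hf : IsHom f) (hfx : ∀ c, f (x c) = gF c)
local notation "𝟬" => (SBA.zero : S)
include hf hfx

theorem f_mfold (l : List (Fin n)) (a : S) :
    f (mfold x a l) = l.foldl (fun p d => p ⋏ gF d) (f a) := by
  induction l generalizing a with
  | nil => rfl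
  | cons d l ih =>
      rw [mfold_cons, ih, List.foldl_cons, hf.1, hfx]

theorem f_JSmapx (l : List (Fin n)) :
    f (JS (l.map x)) = JS (l.map (fun d => gF.{u} d)) := by
  induction l with
  | nil => exact hf.2.2.2
  | cons d l ih =>
      rw [List.map_cons, List.map_cons, JS_cons, JS_cons, hf.2.1, hfx, ih]

theorem f_tS {A : iot n} {c : Fin n} (hc : c ∈ A.1) :
    f (tS x A.1 c) = atomF A c hc := by
  have h1 : f (tS x A.1 c)
      = f (wrd x c (A.1.sort (· ≤ ·))) ∖ f (JS (((A.1ᶜ).sort (· ≤ ·)).map x)) :=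
    hf.2.2.1 _ _
  funext B
  rw [h1]
  have hw : f (wrd x c (A.1.sort (· ≤ ·)))
      = (A.1.sort (· ≤ ·)).foldl (fun p d => p ⋏ gF d) (f (x c)) :=
    f_mfold x f hf hfx (A.1.sort (· ≤ ·)) (x c)
  have hN := f_JSmapx x f hf hfx ((A.1ᶜ).sort (· ≤ ·))
  rw [pi_diff, hw, hfx, mfoldF_apply, hN]
  have hNiff := JSgF_apply_none_iff.{u} ((A.1ᶜ).sort (· ≤ ·)) B
  by_cases hBA : B = A
  · subst hBA
    have hNnone : (JS (((B.1ᶜ).sort (· ≤ ·)).map (fun d => gF.{u} d))) B = none := by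
      rw [hNiff]
      intro d hd
      rw [Finset.mem_sort, Finset.mem_compl] at hd
      exact hd
    rw [hNnone]
    have hsub : ∀ d ∈ B.1.sort (· ≤ ·), d ∈ B.1 := by
      intro d hd
      rw [Finset.mem_sort] at hd
      exact hd
    rw [if_pos hsub, opt_diff]
    show gF c B = atomF B c hc B
    rw [gF_apply_mem hc, atomF, dif_pos rfl]
  · rw [atomF, dif_neg hBA]
    by_cases hsub : B.1 ⊆ A.1
    · have hnsub : ¬ ∀ d ∈ A.1.sort (· ≤ ·), d ∈ B.1 := by
        intro hall
        refine hBA (Subtype.ext (Finset.Subset.antisymm hsub ?_))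
        intro d hd
        exact hall d ((Finset.mem_sort _).2 hd)
      rw [if_neg hnsub]
      cases hNB : (JS (((A.1ᶜ).sort (· ≤ ·)).map (fun d => gF.{u} d))) B with
      | none => rw [opt_diff]
      | some v => rw [opt_diff]
    · have hNsome : (JS (((A.1ᶜ).sort (· ≤ ·)).map (fun d => gF.{u} d))) B ≠ none := by
        intro h
        refine hsub ?_
        intro k hk
        by_contra hkA
        exact (hNiff.1 h) k ((Finset.mem_sort _).2 (Finset.mem_compl.2 hkA)) hk
      cases hNB : (JS (((A.1ᶜ).sort (· ≤ ·)).map (fun d => gF.{u} d))) B with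
      | none => exact absurd hNB hNsome
      | some v => rw [opt_diff]

end HomImage
end SBAaux
namespace SBAaux
open SBA
section Ev
set_option linter.unusedSectionVars false
variable {n : ℕ} {S : Type u} [SBA S] [LeftHanded S] (x : Fin n → S)
local notation "𝟬" => (SBA.zero : S)

/-- interpretation of a coordinate as an element of `S`. -/
def tmS (A : iot n) (o : coordt.{u} n A) : S :=
  match o with
  | none => 𝟬
  | some uc => tS x A.1 uc.down.1

@[simp] theorem tmS_none (A : iot n) : tmS x A none = 𝟬 := rfl
@[simp] theorem tmS_some (A : iot n) (uc : ULift.{u} {c : Fin n // c ∈ A.1}) :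
    tmS x A (some uc) = tS x A.1 uc.down.1 := rfl

theorem iot_ne {A B : iot n} (h : A ≠ B) : A.1 ≠ B.1 :=
  fun h' => h (Subtype.ext h')

theorem tmS_orth {A B : iot n} (h : A ≠ B) (o : coordt.{u} n A) (o' : coordt.{u} n B) :
    tmS x A o ⋏ tmS x B o' = 𝟬 := by
  cases o with
  | none => exact SBA.zero_wedge _
  | some uc =>
      cases o' with
      | none => exact SBA.wedge_zero _
      | some uc' => exact tS_orth x uc.down.2 uc'.down.2 (iot_ne h)

theorem tmS_comm {A B : iot n} (h : A ≠ B) (o : coordt.{u} n A) (o' : coordt.{u} n B) :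
    tmS x A o ⋎ tmS x B o' = tmS x B o' ⋎ tmS x A o :=
  comm0 (tmS_orth x h.symm o' o)

theorem tmS_wedge (A : iot n) (o o' : coordt.{u} n A) :
    tmS x A o ⋏ tmS x A o' = tmS x A (o ⋏ o') := by
  cases o' with
  | none => exact SBA.wedge_zero _
  | some uc' =>
      cases o with
      | none => exact SBA.zero_wedge _
      | some uc => exact tS_wedge_tS x uc'.down.2

theorem tmS_vee (A : iot n) (o o' : coordt.{u} n A) :
    tmS x A o ⋎ tmS x A o' = tmS x A (o ⋎ o') := by
  cases o' with
  | none => exact SBA.vee_zero _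
  | some uc' =>
      cases o with
      | none => exact SBA.zero_vee _
      | some uc => exact tS_vee_tS x uc'.down.2

/-- the coordinate index list. -/
noncomputable def LA (n : ℕ) : List (iot n) := (Finset.univ : Finset (iot n)).toList

theorem LA_nodup : (LA n).Nodup := Finset.nodup_toList _
theorem mem_LA (A : iot n) : A ∈ LA n := by
  rw [LA, Finset.mem_toList]; exact Finset.mem_univ A

/-- the evaluation map. -/
noncomputable def ev : Fr.{u} n → S := fun v => JS ((LA n).map (fun A => tmS x A (v A)))

theorem ev_zero : ev.{u} x (SBA.zero : Fr.{u} n) = 𝟬 := by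
  refine JS_all_zero ?_
  intro b hb
  rcases List.mem_map.1 hb with ⟨A, _, rfl⟩
  rfl

theorem ev_wedge (a b : Fr.{u} n) : ev x a ⋏ ev x b = ev x (a ⋏ b) := by
  rw [ev, ev, JS_wedge, List.map_map]
  refine congrArg JS (List.map_congr_left ?_)
  intro A _
  show tmS x A (a A) ⋏ JS ((LA n).map (fun B => tmS x B (b B))) = tmS x A ((a ⋏ b) A)
  rw [wedge_JS, List.map_map]
  refine JS_of_mem_zero_or (w := tmS x A ((a ⋏ b) A)) ?_ ?_
  · refine List.mem_map.2 ⟨A, mem_LA A, ?_⟩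
    show tmS x A (a A) ⋏ tmS x A (b A) = tmS x A ((a ⋏ b) A)
    rw [tmS_wedge]
    rfl
  · intro p hp
    rcases List.mem_map.1 hp with ⟨B, _, rfl⟩
    by_cases hAB : B = A
    · subst hAB
      refine Or.inl ?_
      show tmS x B (a B) ⋏ tmS x B (b B) = tmS x B ((a ⋏ b) B)
      rw [tmS_wedge]
      rfl
    · exact Or.inr (tmS_orth x (fun h => hAB h.symm) _ _)

theorem ev_vee (a b : Fr.{u} n) : ev x a ⋎ ev x b = ev x (a ⋎ b) := by
  have main : ∀ l : List (iot n), l.Nodup →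
      JS (l.map (fun A => tmS x A (a A))) ⋎ JS (l.map (fun A => tmS x A (b A)))
        = JS (l.map (fun A => tmS x A ((a ⋎ b) A))) := by
    intro l hl
    induction l with
    | nil => exact SBA.vee_zero _
    | cons A l' ih =>
        have hA : A ∉ l' := (List.nodup_cons.1 hl).1
        have hl' : l'.Nodup := (List.nodup_cons.1 hl).2
        have hcomm : ∀ p ∈ l'.map (fun B => tmS x B (a B)),
            tmS x A (b A) ⋎ p = p ⋎ tmS x A (b A) := by
          intro p hp
          rcases List.mem_map.1 hp with ⟨B, hB, rfl⟩
          exact tmS_comm x (fun h => hA (by rw [h]; exact hB)) _ _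
        simp only [List.map_cons, JS_cons]
        calc (tmS x A (a A) ⋎ JS (l'.map (fun B => tmS x B (a B)))) ⋎
              (tmS x A (b A) ⋎ JS (l'.map (fun B => tmS x B (b B))))
            = tmS x A (a A) ⋎ ((JS (l'.map (fun B => tmS x B (a B))) ⋎ tmS x A (b A)) ⋎
                JS (l'.map (fun B => tmS x B (b B)))) := by
              rw [SBA.vee_assoc, SBA.vee_assoc]
          _ = tmS x A (a A) ⋎ ((tmS x A (b A) ⋎ JS (l'.map (fun B => tmS x B (a B)))) ⋎
                JS (l'.map (fun B => tmS x B (b B)))) := by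
              rw [vee_JS_comm hcomm]
          _ = (tmS x A (a A) ⋎ tmS x A (b A)) ⋎
                (JS (l'.map (fun B => tmS x B (a B))) ⋎ JS (l'.map (fun B => tmS x B (b B)))) := by
              rw [SBA.vee_assoc, SBA.vee_assoc]
          _ = tmS x A ((a ⋎ b) A) ⋎ JS (l'.map (fun B => tmS x B ((a ⋎ b) B))) := by
              rw [tmS_vee, ih hl']
              rfl
  exact main (LA n) LA_nodup

theorem JS_diff (l : List S) (r : S) : JS l ∖ r = JS (l.map (fun p => p ∖ r)) := by
  induction l with
  | nil => exact zero_diff r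
  | cons a l ih => rw [JS_cons, vee_diff, ih]; rfl

theorem diff_JS_foldl (r : S) (l : List S) :
    r ∖ JS l = l.foldl (fun acc h => acc ∖ h) r := by
  induction l generalizing r with
  | nil => exact diff_zero' r
  | cons a l ih => rw [JS_cons, diff_vee, List.foldl_cons, ih]

theorem foldl_diff_zero (b : Fr.{u} n) (l : List (iot n)) :
    l.foldl (fun acc B => acc ∖ tmS x B (b B)) 𝟬 = 𝟬 := by
  induction l with
  | nil => rfl
  | cons A l ih => rw [List.foldl_cons, zero_diff, ih]

theorem tS_diff_tmS {A B : iot n} {c : Fin n} (hc : c ∈ A.1) (hne : A ≠ B)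
    (o : coordt.{u} n B) : tS x A.1 c ∖ tmS x B o = tS x A.1 c := by
  cases o with
  | none => exact diff_zero' _
  | some uc => exact tS_diff_orth x hc uc.down.2 (iot_ne hne)

theorem foldl_diff_keep (b : Fr.{u} n) {A : iot n} {c : Fin n} (hc : c ∈ A.1)
    {l : List (iot n)} (hA : A ∉ l) :
    l.foldl (fun acc B => acc ∖ tmS x B (b B)) (tS x A.1 c) = tS x A.1 c := by
  induction l with
  | nil => rfl
  | cons B l ih =>
      rw [List.foldl_cons, tS_diff_tmS x hc (fun h => hA (h ▸ List.mem_cons_self)) _]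
      exact ih (fun h => hA (List.mem_cons_of_mem B h))

theorem foldl_diff_main (b : Fr.{u} n) {A : iot n} {c : Fin n} (hc : c ∈ A.1) :
    ∀ {l : List (iot n)}, l.Nodup → A ∈ l →
    l.foldl (fun acc B => acc ∖ tmS x B (b B)) (tS x A.1 c)
      = (match b A with | none => tS x A.1 c | some _ => 𝟬) := by
  intro l
  induction l with
  | nil => intro _ h; simp at h
  | cons B l ih =>
      intro hnd hmem
      have hB : B ∉ l := (List.nodup_cons.1 hnd).1
      have hl : l.Nodup := (List.nodup_cons.1 hnd).2
      by_cases hAB : A = B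
      · subst hAB
        rw [List.foldl_cons]
        cases hbA : b A with
        | none =>
            rw [tmS_none, diff_zero']
            exact foldl_diff_keep x b hc hB
        | some uc =>
            rw [tmS_some, tS_diff_self x uc.down.2]
            exact foldl_diff_zero x b l
      · have hmem' : A ∈ l := by
          rcases List.mem_cons.1 hmem with h | h
          · exact absurd h hAB
          · exact h
        rw [List.foldl_cons, tS_diff_tmS x hc hAB _]
        exact ih hl hmem'

theorem ev_diff (a b : Fr.{u} n) : ev x a ∖ ev x b = ev x (a ∖ b) := by
  rw [ev, ev, JS_diff, List.map_map]
  refine congrArg JS (List.map_congr_left ?_)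
  intro A hA
  show tmS x A (a A) ∖ ev x b = tmS x A ((a ∖ b) A)
  cases haA : a A with
  | none =>
      rw [show tmS x A (none : coordt.{u} n A) = 𝟬 from rfl, zero_diff]
      have : (a ∖ b) A = a A ∖ b A := rfl
      rw [this, haA]
      cases b A <;> rfl
  | some uc =>
      rw [tmS_some, ev, diff_JS_foldl]
      have hfold : ((LA n).map (fun B => tmS x B (b B))).foldl (fun acc h => acc ∖ h) (tS x A.1 uc.down.1)
          = (LA n).foldl (fun acc B => acc ∖ tmS x B (b B)) (tS x A.1 uc.down.1) := by
        rw [List.foldl_map]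
      rw [hfold, foldl_diff_main x b uc.down.2 LA_nodup (mem_LA A)]
      have : (a ∖ b) A = a A ∖ b A := rfl
      rw [this, haA]
      cases b A <;> rfl

theorem JS_map_filter_zero {α : Type v} (p : α → Prop) [DecidablePred p] (h : α → S)
    {l : List α} (hz : ∀ a ∈ l, ¬ p a → h a = 𝟬) :
    JS (l.map h) = JS ((l.filter (fun a => p a)).map h) := by
  induction l with
  | nil => rfl
  | cons a l ih =>
      by_cases hp : p a
      · rw [List.filter_cons_of_pos (by simpa using hp), List.map_cons, List.map_cons,
          JS_cons, JS_cons, ih (fun e he hne => hz e (List.mem_cons_of_mem a he) hne)]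
      · rw [List.filter_cons_of_neg (by simpa using hp), List.map_cons, JS_cons,
          hz a (List.mem_cons_self) hp, SBA.zero_vee,
          ih (fun e he hne => hz e (List.mem_cons_of_mem a he) hne)]

theorem ev_gF (c : Fin n) : ev.{u} x (gF c) = x c := by
  rw [ev]
  have h1 : ∀ A ∈ LA n, ¬ (c ∈ A.1) → tmS x A (gF.{u} c A) = 𝟬 := by
    intro A _ hc
    rw [gF_apply_not_mem hc]
    rfl
  rw [JS_map_filter_zero (fun A : iot n => c ∈ A.1) _ h1]
  have h2 : (((LA n).filter (fun A : iot n => c ∈ A.1)).map (fun A => tmS x A (gF.{u} c A)))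
      = (((LA n).filter (fun A : iot n => c ∈ A.1)).map Subtype.val).map (fun B => tS x B c) := by
    rw [List.map_map]
    refine List.map_congr_left ?_
    intro A hA
    have hcA : c ∈ A.1 := by
      have := (List.mem_filter.1 hA).2
      simpa using this
    show tmS x A (gF.{u} c A) = tS x A.1 c
    rw [gF_apply_mem hcA]
    rfl
  rw [h2]
  refine (x_eq_JS_tS x c _ ?_ ?_).symm
  · refine List.Nodup.map_on ?_ (List.Nodup.filter _ LA_nodup)
    intro A _ B _ hv
    exact Subtype.ext hv
  · intro B
    constructor
    · intro hB
      rcases List.mem_map.1 hB with ⟨A, hA, rfl⟩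
      have := (List.mem_filter.1 hA).2
      simpa using this
    · intro hcB
      refine List.mem_map.2 ⟨⟨B, ⟨c, hcB⟩⟩, ?_, rfl⟩
      rw [List.mem_filter]
      exact ⟨mem_LA _, by simpa using hcB⟩

end Ev
end SBAaux
namespace SBAaux
open SBA
section FEv
set_option linter.unusedSectionVars false
variable {n : ℕ} {S : Type u} [SBA S] [LeftHanded S] (x : Fin n → S)
  (f : S → Fr.{u} n) (hf : IsHom f) (hfx : ∀ c, f (x c) = gF c)
include hf hfx

theorem f_JS (l : List S) : f (JS l) = JS (l.map f) := by
  induction l with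
  | nil => exact hf.2.2.2
  | cons a l ih => rw [JS_cons, hf.2.1, ih]; rfl

theorem f_ev (v : Fr.{u} n) : f (ev x v) = v := by
  rw [ev, f_JS x f hf hfx, List.map_map]
  funext B
  rw [JS_apply, List.map_map]
  refine JS_of_mem_zero_or (w := v B) ?_ ?_
  · refine List.mem_map.2 ⟨B, mem_LA B, ?_⟩
    show (f (tmS x B (v B))) B = v B
    cases hvB : v B with
    | none =>
        rw [tmS_none, hf.2.2.2]
        rfl
    | some uc =>
        rw [tmS_some, f_tS x f hf hfx uc.down.2, atomF, dif_pos rfl]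
  · intro p hp
    rcases List.mem_map.1 hp with ⟨A, _, rfl⟩
    by_cases hAB : A = B
    · subst hAB
      left
      show (f (tmS x A (v A))) A = v A
      cases hvA : v A with
      | none => rw [tmS_none, hf.2.2.2]; rfl
      | some uc => rw [tmS_some, f_tS x f hf hfx uc.down.2, atomF, dif_pos rfl]
    · right
      show (f (tmS x A (v A))) B = SBA.zero
      cases hvA : v A with
      | none => rw [tmS_none, hf.2.2.2]; rfl
      | some uc => rw [tmS_some, f_tS x f hf hfx uc.down.2, atomF, dif_neg (fun h => hAB h.symm)]; rfl

end FEv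

/-- counting. -/
theorem card_Fr (n : ℕ) :
    Nat.card (Fr.{u} n) = ∏ j ∈ Finset.range (n + 1), (j + 1) ^ n.choose j := by
  rw [Nat.card_pi]
  have h1 : ∀ A : iot n, Nat.card (coordt.{u} n A) = A.1.card + 1 := by
    intro A
    rw [Nat.card_eq_fintype_card]
    rw [Fintype.card_option, Fintype.card_ulift, Fintype.card_coe]
  calc ∏ A : iot n, Nat.card (coordt.{u} n A)
      = ∏ A : iot n, (A.1.card + 1) := Finset.prod_congr rfl (fun A _ => h1 A)
    _ = ∏ A ∈ Finset.univ.filter (fun A : Finset (Fin n) => A.Nonempty), (A.card + 1) := by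
        symm
        exact Finset.prod_subtype (Finset.univ.filter (fun A : Finset (Fin n) => A.Nonempty))
          (fun A => by simp) (fun A => A.card + 1)
    _ = ∏ A : Finset (Fin n), (A.card + 1) := by
        rw [← Finset.prod_filter_mul_prod_filter_not Finset.univ
          (fun A : Finset (Fin n) => A.Nonempty) (fun A => A.card + 1)]
        have : ∏ A ∈ Finset.univ.filter (fun A : Finset (Fin n) => ¬ A.Nonempty),
            (A.card + 1) = 1 := by
          refine Finset.prod_eq_one ?_
          intro A hA
          have : A = ∅ := Finset.not_nonempty_iff_eq_empty.1 (Finset.mem_filter.1 hA).2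
          rw [this]
          rfl
        rw [this, mul_one]
    _ = ∏ j ∈ Finset.range (n + 1), ∏ A ∈ Finset.univ.filter
          (fun A : Finset (Fin n) => A.card = j), (A.card + 1) := by
        refine (Finset.prod_fiberwise_of_maps_to ?_ _).symm
        intro A _
        rw [Finset.mem_range, Nat.lt_succ_iff]
        calc A.card ≤ (Finset.univ : Finset (Fin n)).card := Finset.card_le_univ A
          _ = n := by rw [Finset.card_univ, Fintype.card_fin]
    _ = ∏ j ∈ Finset.range (n + 1), (j + 1) ^ n.choose j := by
        refine Finset.prod_congr rfl ?_
        intro j _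
        have hval : ∀ A ∈ Finset.univ.filter (fun A : Finset (Fin n) => A.card = j),
            A.card + 1 = j + 1 := by
          intro A hA
          rw [(Finset.mem_filter.1 hA).2]
        rw [Finset.prod_congr rfl hval, Finset.prod_const]
        congr 1
        have : Finset.univ.filter (fun A : Finset (Fin n) => A.card = j)
            = Finset.powersetCard j (Finset.univ : Finset (Fin n)) := by
          rw [Finset.powersetCard_eq_filter, Finset.powerset_univ]
        rw [this, Finset.card_powersetCard, Finset.card_univ, Fintype.card_fin]

theorem range_succ_eq_insert_Icc (n : ℕ) :
    Finset.range (n + 1) = insert 0 (Finset.Icc 1 n) := by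
  ext k
  simp only [Finset.mem_range, Finset.mem_insert, Finset.mem_Icc]
  omega

theorem card_Fr' (n : ℕ) :
    Nat.card (Fr.{u} n) = ∏ m ∈ Finset.Icc 1 n, (m + 1) ^ n.choose m := by
  rw [card_Fr, range_succ_eq_insert_Icc, Finset.prod_insert (by simp)]
  simp

end SBAaux
theorem stmt6 (n : ℕ) (hn : 1 ≤ n) (S : Type u) [SBA S] [LeftHanded S]
    (x : Fin n → S) (hinj : Function.Injective x)
    (hfree : LFreelyGenerates S (Set.range x)) :
    Finite S ∧ Nat.card S = ∏ m ∈ Finset.Icc 1 n, (m + 1) ^ n.choose m := by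
  classical
  have hne : Nonempty (Fin n) := ⟨⟨0, hn⟩⟩
  obtain ⟨f, hf, hfg⟩ := hfree.2 (SBAaux.Fr.{u} n)
    (fun z => SBAaux.gF (Function.invFun x z.1))
  have hfx : ∀ c, f (x c) = SBAaux.gF c := by
    intro c
    have h1 : f (x c) = SBAaux.gF (Function.invFun x (x c)) := hfg ⟨x c, ⟨c, rfl⟩⟩
    rw [h1, Function.leftInverse_invFun hinj c]
  have hev_surj : Function.Surjective (SBAaux.ev.{u} x) := by
    have hT := hfree.1 (Set.range (SBAaux.ev.{u} x)) ?_ ?_ ?_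
    · intro s
      have hs : s ∈ Set.range (SBAaux.ev.{u} x) := by rw [hT]; trivial
      exact hs
    · rintro z ⟨c, rfl⟩
      exact ⟨SBAaux.gF c, SBAaux.ev_gF x c⟩
    · exact ⟨SBA.zero, SBAaux.ev_zero x⟩
    · rintro a b ⟨va, rfl⟩ ⟨vb, rfl⟩
      exact ⟨⟨va ⋏ vb, (SBAaux.ev_wedge x va vb).symm⟩,
        ⟨va ⋎ vb, (SBAaux.ev_vee x va vb).symm⟩,
        ⟨va ∖ vb, (SBAaux.ev_diff x va vb).symm⟩⟩
  have hev_inj : Function.Injective (SBAaux.ev.{u} x) := by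
    intro v w h
    have h2 := congrArg f h
    rwa [SBAaux.f_ev x f hf hfx v, SBAaux.f_ev x f hf hfx w] at h2
  have hbij : Function.Bijective (SBAaux.ev.{u} x) := ⟨hev_inj, hev_surj⟩
  constructor
  · exact Finite.of_surjective _ hev_surj
  · rw [← Nat.card_eq_of_bijective _ hbij, SBAaux.card_Fr']
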